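/- Let g(y) = (τ(1−τ)/Γ(α+1,α)) [α + ρ_τ(y)]^α exp{−[α + ρ_τ(y)]} be the standard asymmetric connected double truncated gamma density with shape parameter α > 0 and skewness 0 < τ < 1, with almost-everywhere derivative ġ. For η ∈ ℝ define ξ̇_{(η,1)_η}(y) = −(1/2) ġ(y−η) 1{g(y−η)>0}/√(g(y−η)). Then for every η ∈ ℝ, ∫_{−∞}^{∞} ξ̇²_{(η,1)_η}(y) dy ≤ max{τ², (1−τ)²}/2; in particular ξ̇_{(η,1)_η} is square integrable. -/

import Mathlib

open MeasureTheory

/-- The check loss `ρ_τ(y) = y(τ - 1{y<0})`. -/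
noncomputable def checkLoss (τ y : ℝ) : ℝ := y * (τ - if y < 0 then 1 else 0)

/-- Upper incomplete gamma function `Γ(t,k) = ∫_k^∞ x^{t-1} e^{-x} dx`. -/
noncomputable def uiGamma (t k : ℝ) : ℝ := ∫ x in Set.Ioi k, x ^ (t - 1) * Real.exp (-x)

/-- The standard asymmetric connected double truncated gamma density
`g(y) = (τ(1-τ)/Γ(α+1,α)) [α+ρ_τ(y)]^α exp{-[α+ρ_τ(y)]}`. -/
noncomputable def acdtgDensity (α τ : ℝ) : ℝ → ℝ := fun y =>
  τ * (1 - τ) / uiGamma (α + 1) α * (α + checkLoss τ y) ^ α *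
    Real.exp (-(α + checkLoss τ y))

/-- The candidate location Hellinger derivative
`ξ̇_{(η,1)_η}(y) = -(1/2) ġ(y-η) 1{g(y-η)>0}/√(g(y-η))`. -/
noncomputable def acdtgXi (α τ : ℝ) (gdot : ℝ → ℝ) (η : ℝ) : ℝ → ℝ := fun y =>
  -(1 / 2) * gdot (y - η) * (if 0 < acdtgDensity α τ (y - η) then 1 else 0) /
    Real.sqrt (acdtgDensity α τ (y - η))

section Aux

open Set Real

lemma aux_integral_comp_add_Ioi (f : ℝ → ℝ) (a b : ℝ) :
    (∫ x in Set.Ioi a, f (x + b)) = ∫ x in Set.Ioi (a + b), f x := by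
  have A : MeasurableEmbedding (fun x : ℝ => x + b) :=
    (Homeomorph.addRight b).isClosedEmbedding.measurableEmbedding
  have h := A.setIntegral_map (μ := volume) f (Set.Ioi (a + b))
  rw [map_add_right_eq_self (volume : Measure ℝ) b] at h
  rw [preimage_add_const_Ioi, add_sub_cancel_right] at h
  exact h.symm

lemma aux_integrableOn_comp_add_Ioi (f : ℝ → ℝ) (a b : ℝ)
    (hf : IntegrableOn f (Set.Ioi (a + b))) :
    IntegrableOn (fun x => f (x + b)) (Set.Ioi a) := by
  have A : MeasurableEmbedding (fun x : ℝ => x + b) :=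
    (Homeomorph.addRight b).isClosedEmbedding.measurableEmbedding
  have h := A.integrableOn_map_iff (μ := volume) (f := f) (s := Set.Ioi (a + b))
  rw [map_add_right_eq_self (volume : Measure ℝ) b] at h
  have := h.mp hf
  rwa [preimage_add_const_Ioi, add_sub_cancel_right] at this

/-- `checkLoss` is nonneg. -/
lemma checkLoss_nonneg {τ : ℝ} (hτ0 : 0 < τ) (hτ1 : τ < 1) (y : ℝ) : 0 ≤ checkLoss τ y := by
  unfold checkLoss
  split_ifs with h
  · nlinarith
  · nlinarith [not_lt.mp h]

lemma checkLoss_measurable (τ : ℝ) : Measurable (checkLoss τ) := by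
  unfold checkLoss
  exact measurable_id.mul ((measurable_const.sub (Measurable.ite
    (measurableSet_lt measurable_id measurable_const) measurable_const measurable_const)))

end Aux


section Aux2

open Set Real

lemma aux_integrableOn_comp_neg_Iic (K : ℝ → ℝ) (hK : IntegrableOn K (Set.Ici (0:ℝ))) :
    IntegrableOn (fun x => K (-x)) (Set.Iic (0:ℝ)) := by
  have A : MeasurableEmbedding (fun x : ℝ => -x) :=
    (Homeomorph.neg ℝ).isClosedEmbedding.measurableEmbedding
  have h := A.integrableOn_map_iff (μ := volume) (f := K) (s := Set.Ici (0:ℝ))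
  rw [Measure.map_neg_eq_self (volume : Measure ℝ)] at h
  have := h.mp hK
  simpa [neg_preimage, neg_Ici, Function.comp_def] using this

/-- Positivity of the normalizing constant. -/
lemma uiGamma_pos {α : ℝ} (hα : 0 < α) : 0 < uiGamma (α + 1) α := by
  have hint : IntegrableOn (fun x : ℝ => x ^ (α + 1 - 1) * Real.exp (-x)) (Set.Ioi α) := by
    have h := (Real.GammaIntegral_convergent (by linarith : (0:ℝ) < α + 1)).mono_set
      (Set.Ioi_subset_Ioi hα.le)
    exact h.congr_fun (fun x _ => mul_comm _ _) measurableSet_Ioi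
  rw [uiGamma]
  rw [setIntegral_pos_iff_support_of_nonneg_ae ?_ hint]
  · refine lt_of_lt_of_le ?_ (measure_mono (Set.subset_inter (fun x hx => ?_) Set.Subset.rfl))
    · rw [Real.volume_Ioi]; exact ENNReal.zero_lt_top
    · have hx0 : 0 < x := lt_trans hα hx
      exact (mul_pos (Real.rpow_pos_of_pos hx0 _) (Real.exp_pos _)).ne'
  · refine (ae_restrict_iff' measurableSet_Ioi).mpr (Filter.Eventually.of_forall fun x hx => ?_)
    have hx0 : 0 < x := lt_trans hα hx
    exact mul_nonneg (Real.rpow_nonneg hx0.le _) (Real.exp_pos _).le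

lemma acdtg_pos {α τ : ℝ} (hα : 0 < α) (hτ0 : 0 < τ) (hτ1 : τ < 1) (y : ℝ) :
    0 < acdtgDensity α τ y := by
  have h1 : 0 < α + checkLoss τ y := by
    have := checkLoss_nonneg hτ0 hτ1 y; linarith
  exact mul_pos (mul_pos (div_pos (mul_pos hτ0 (by linarith)) (uiGamma_pos hα))
    (Real.rpow_pos_of_pos h1 _)) (Real.exp_pos _)

/-- The a.e. derivative of the density, in explicit form. -/
noncomputable def acdtgD (α τ : ℝ) : ℝ → ℝ := fun y =>
  -((if y < 0 then τ - 1 else τ) * (checkLoss τ y / (α + checkLoss τ y)) * acdtgDensity α τ y)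

lemma acdtg_hasDerivAt_gen (c m α : ℝ) {y : ℝ} (hu : 0 < α + y * m) :
    HasDerivAt (fun z => c * ((α + z * m) ^ α * Real.exp (-(α + z * m))))
      (-(m * (y * m / (α + y * m)) * (c * ((α + y * m) ^ α * Real.exp (-(α + y * m)))))) y := by
  have hu' : HasDerivAt (fun z : ℝ => α + z * m) m y := by
    simpa using ((hasDerivAt_id y).mul_const m).const_add α
  have hp : HasDerivAt (fun z : ℝ => (α + z * m) ^ α)
      (α * (α + y * m) ^ (α - 1) * m) y := by
    have h := (Real.hasDerivAt_rpow_const (x := α + y * m) (p := α) (Or.inl hu.ne')).comp y hu'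
    simpa [Function.comp_def] using h
  have he : HasDerivAt (fun z : ℝ => Real.exp (-(α + z * m)))
      (Real.exp (-(α + y * m)) * -m) y := by
    simpa using (hu'.neg).exp
  have hm := (hp.mul he).const_mul c
  refine hm.congr_deriv ?_
  rw [Real.rpow_sub_one hu.ne']
  field_simp
  ring

lemma acdtg_hasDerivAt {α τ : ℝ} (hα : 0 < α) (hτ0 : 0 < τ) (hτ1 : τ < 1)
    {y : ℝ} (hy : y ≠ 0) :
    HasDerivAt (acdtgDensity α τ) (acdtgD α τ y) y := by
  rcases lt_or_gt_of_ne hy with hneg | hpos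
  · have hu : 0 < α + y * (τ - 1) := by nlinarith
    have key := acdtg_hasDerivAt_gen (τ * (1 - τ) / uiGamma (α + 1) α) (τ - 1) α hu
    have hloc : acdtgDensity α τ =ᶠ[nhds y]
        fun z => τ * (1 - τ) / uiGamma (α + 1) α *
          ((α + z * (τ - 1)) ^ α * Real.exp (-(α + z * (τ - 1)))) := by
      filter_upwards [gt_mem_nhds hneg] with z hz
      simp only [acdtgDensity, checkLoss, if_pos hz, mul_assoc]
    have h2 := key.congr_of_eventuallyEq hloc
    refine h2.congr_deriv ?_
    simp only [acdtgD, acdtgDensity, checkLoss, if_pos hneg]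
    ring
  · have hu : 0 < α + y * τ := by nlinarith
    have key := acdtg_hasDerivAt_gen (τ * (1 - τ) / uiGamma (α + 1) α) τ α hu
    have hloc : acdtgDensity α τ =ᶠ[nhds y]
        fun z => τ * (1 - τ) / uiGamma (α + 1) α *
          ((α + z * τ) ^ α * Real.exp (-(α + z * τ))) := by
      filter_upwards [lt_mem_nhds hpos] with z hz
      simp only [acdtgDensity, checkLoss, if_neg (not_lt.mpr hz.le), sub_zero, mul_assoc]
    have h2 := key.congr_of_eventuallyEq hloc
    refine h2.congr_deriv ?_
    simp only [acdtgD, acdtgDensity, checkLoss, if_neg (not_lt.mpr hpos.le), sub_zero]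
    ring

lemma acdtg_measurable (α τ : ℝ) : Measurable (acdtgDensity α τ) := by
  unfold acdtgDensity
  have h := checkLoss_measurable τ
  measurability

/-- The density integrates to one. -/
lemma acdtg_integral {α τ : ℝ} (hα : 0 < α) (hτ0 : 0 < τ) (hτ1 : τ < 1) :
    Integrable (acdtgDensity α τ) ∧ ∫ y, acdtgDensity α τ y = 1 := by
  have hΓ := uiGamma_pos hα
  set Γ : ℝ := uiGamma (α + 1) α with hΓdef
  set c : ℝ := τ * (1 - τ) / Γ with hcdef
  set f : ℝ → ℝ := fun x => x ^ α * Real.exp (-x) with hfdef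
  have hfInt : IntegrableOn f (Set.Ioi α) := by
    have h := (Real.GammaIntegral_convergent (by linarith : (0:ℝ) < α + 1)).mono_set
      (Set.Ioi_subset_Ioi hα.le)
    refine h.congr_fun (fun x _ => ?_) measurableSet_Ioi
    rw [hfdef]; simp [add_sub_cancel_right, mul_comm]
  have hΓeq : Γ = ∫ x in Set.Ioi α, f x := by
    rw [hΓdef, uiGamma]; congr 1; ext x; rw [hfdef]; simp [add_sub_cancel_right]
  set H : ℝ → ℝ := fun x => c * f (x + α) with hHdef
  have hH : IntegrableOn H (Set.Ioi (0:ℝ)) := by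
    have := aux_integrableOn_comp_add_Ioi (fun t => c * f t) 0 α
      (by rw [zero_add]; exact hfInt.const_mul c)
    exact this
  have hHint : ∫ x in Set.Ioi (0:ℝ), H x = c * Γ := by
    rw [hHdef]
    have := aux_integral_comp_add_Ioi (fun t => c * f t) 0 α
    rw [zero_add] at this
    rw [this, MeasureTheory.integral_const_mul, hΓeq]
  -- the two halves
  have h1τ : (0:ℝ) < 1 - τ := by linarith
  have hIoiEq : Set.EqOn (acdtgDensity α τ) (fun y => H (τ * y)) (Set.Ioi 0) := by
    intro y hy
    have : ¬ y < 0 := not_lt.mpr (le_of_lt hy)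
    simp only [acdtgDensity, checkLoss, if_neg this, sub_zero, hHdef, hfdef, hcdef]
    rw [mul_comm y τ, hΓdef]
    ring_nf
  have hIicEq : Set.EqOn (acdtgDensity α τ) (fun y => H ((1 - τ) * (-y))) (Set.Iic 0) := by
    intro y hy
    have hkey : checkLoss τ y = (1 - τ) * (-y) := by
      simp only [checkLoss]
      split_ifs with h
      · ring
      · have : y = 0 := le_antisymm hy (not_lt.mp h)
        rw [this]; ring
    simp only [acdtgDensity, hkey, hHdef, hfdef, hcdef]
    have : (1 - τ) * -y + α = α + (1 - τ) * -y := by ring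
    rw [this, mul_assoc]
  have hK : IntegrableOn (fun z => H ((1 - τ) * z)) (Set.Ici (0:ℝ)) := by
    rw [integrableOn_Ici_iff_integrableOn_Ioi]
    have := (integrableOn_Ioi_comp_mul_left_iff H 0 h1τ).mpr (by rw [mul_zero]; exact hH)
    exact this
  have hInt1 : IntegrableOn (acdtgDensity α τ) (Set.Ioi 0) := by
    refine IntegrableOn.congr_fun ?_ hIoiEq.symm measurableSet_Ioi
    exact (integrableOn_Ioi_comp_mul_left_iff H 0 hτ0).mpr (by rw [mul_zero]; exact hH)
  have hInt2 : IntegrableOn (acdtgDensity α τ) (Set.Iic 0) := by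
    refine IntegrableOn.congr_fun ?_ hIicEq.symm measurableSet_Iic
    exact aux_integrableOn_comp_neg_Iic (fun z => H ((1 - τ) * z)) hK
  have hIntegrable : Integrable (acdtgDensity α τ) := by
    have h := hInt2.union hInt1
    rwa [Set.Iic_union_Ioi, integrableOn_univ] at h
  refine ⟨hIntegrable, ?_⟩
  have hsplit := MeasureTheory.setIntegral_union (Set.Iic_disjoint_Ioi le_rfl)
    measurableSet_Ioi hInt2 hInt1
  rw [Set.Iic_union_Ioi, MeasureTheory.setIntegral_univ] at hsplit
  have hval1 : ∫ y in Set.Ioi (0:ℝ), acdtgDensity α τ y = 1 - τ := by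
    rw [MeasureTheory.setIntegral_congr_fun measurableSet_Ioi hIoiEq]
    have := MeasureTheory.integral_comp_mul_left_Ioi H 0 hτ0
    rw [mul_zero] at this
    rw [this, hHint, smul_eq_mul, hcdef]
    field_simp
  have hval2 : ∫ y in Set.Iic (0:ℝ), acdtgDensity α τ y = τ := by
    rw [MeasureTheory.setIntegral_congr_fun measurableSet_Iic hIicEq]
    have hneg := integral_comp_neg_Iic (E := ℝ) 0 (fun z => H ((1 - τ) * z))
    have h2 : (∫ y in Set.Iic (0:ℝ), H ((1 - τ) * (-y))) = ∫ z in Set.Ioi (0:ℝ), H ((1 - τ) * z) := by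
      rw [neg_zero] at hneg
      exact hneg
    rw [h2]
    have := MeasureTheory.integral_comp_mul_left_Ioi H 0 h1τ
    rw [mul_zero] at this
    rw [this, hHint, smul_eq_mul, hcdef]
    field_simp
  rw [hsplit, hval1, hval2]
  ring

end Aux2

set_option maxHeartbeats 1000000 in
/-- for the ACDTG location family with shape `α > 0`, the squared `L²` norm
of the candidate location Hellinger derivative is bounded by `max{τ², (1-τ)²}/2`; in
particular it is square integrable. -/
theorem acdtg_hellinger_derivative_bound
    (α τ : ℝ) (hα : 0 < α) (hτ0 : 0 < τ) (hτ1 : τ < 1)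
    (gdot : ℝ → ℝ)
    (hgdot : ∀ᵐ y : ℝ, HasDerivAt (acdtgDensity α τ) (gdot y) y) :
    ∀ η : ℝ,
      (∫ y, (acdtgXi α τ gdot η y) ^ 2) ≤ max (τ ^ 2) ((1 - τ) ^ 2) / 2 ∧
      Integrable (fun y => (acdtgXi α τ gdot η y) ^ 2) := by
  intro η
  set M := max (τ ^ 2) ((1 - τ) ^ 2) with hM
  have hM0 : 0 ≤ M := le_trans (sq_nonneg τ) (le_max_left _ _)
  have hgpos : ∀ y, 0 < acdtgDensity α τ y := acdtg_pos hα hτ0 hτ1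
  obtain ⟨hgInt, hgOne⟩ := acdtg_integral hα hτ0 hτ1
  have h0 : ∀ᵐ y : ℝ, y ≠ (0:ℝ) := by
    rw [ae_iff]
    simp only [not_ne_iff]
    rw [Set.setOf_eq_eq_singleton]
    exact Real.volume_singleton
  have hDeq : ∀ᵐ y : ℝ, gdot y = acdtgD α τ y := by
    filter_upwards [hgdot, h0] with y h1 h2
    exact h1.unique (acdtg_hasDerivAt hα hτ0 hτ1 h2)
  have hshift : ∀ᵐ y : ℝ, gdot (y - η) = acdtgD α τ (y - η) :=
    ((measurePreserving_sub_right (volume : Measure ℝ) η).quasiMeasurePreserving).ae hDeq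
  set E : ℝ → ℝ := fun y => (if y < 0 then τ - 1 else τ) ^ 2 *
      (checkLoss τ y / (α + checkLoss τ y)) ^ 2 * acdtgDensity α τ y / 4 with hE
  have hEnonneg : ∀ y, 0 ≤ E y := by
    intro y
    rw [hE]
    have := (hgpos y).le
    have h2 : (0:ℝ) ≤ (if y < 0 then τ - 1 else τ) ^ 2 *
        (checkLoss τ y / (α + checkLoss τ y)) ^ 2 * acdtgDensity α τ y :=
      mul_nonneg (mul_nonneg (sq_nonneg _) (sq_nonneg _)) this
    linarith
  have hEle : ∀ y, E y ≤ M / 4 * acdtgDensity α τ y := by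
    intro y
    have hg := (hgpos y).le
    have h1 : (if y < 0 then τ - 1 else τ) ^ 2 ≤ M := by
      split_ifs
      · calc (τ - 1) ^ 2 = (1 - τ) ^ 2 := by ring
          _ ≤ M := le_max_right _ _
      · exact le_max_left _ _
    have hρ := checkLoss_nonneg hτ0 hτ1 y
    have hu : 0 < α + checkLoss τ y := by linarith
    have h2 : (checkLoss τ y / (α + checkLoss τ y)) ^ 2 ≤ 1 :=
      pow_le_one₀ (div_nonneg hρ hu.le) ((div_le_one hu).mpr (by linarith))
    have hA : (if y < 0 then τ - 1 else τ) ^ 2 *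
        (checkLoss τ y / (α + checkLoss τ y)) ^ 2 ≤ M * 1 :=
      mul_le_mul h1 h2 (sq_nonneg _) hM0
    have hB := mul_le_mul_of_nonneg_right hA hg
    rw [hE]
    rw [mul_one] at hB
    linarith
  have hxiEq : (fun y => (acdtgXi α τ gdot η y) ^ 2) =ᵐ[(volume : Measure ℝ)]
      fun y => E (y - η) := by
    filter_upwards [hshift] with y hy
    simp only [acdtgXi, if_pos (hgpos (y - η)), hy, acdtgD, hE]
    have hgy := hgpos (y - η)
    rw [div_pow, Real.sq_sqrt hgy.le, div_eq_iff hgy.ne']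
    ring
  have hEmeas : Measurable E := by
    rw [hE]
    have m1 : Measurable fun y : ℝ => (if y < 0 then τ - 1 else τ) :=
      Measurable.ite (measurableSet_lt measurable_id measurable_const)
        measurable_const measurable_const
    have m2 : Measurable fun y : ℝ => checkLoss τ y / (α + checkLoss τ y) :=
      (checkLoss_measurable τ).div ((checkLoss_measurable τ).const_add α)
    exact (((m1.pow_const 2).mul (m2.pow_const 2)).mul (acdtg_measurable α τ)).div_const 4
  have hgshift : Integrable (fun y => acdtgDensity α τ (y - η)) := hgInt.comp_sub_right η
  have hEshiftInt : Integrable (fun y => E (y - η)) := by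
    refine Integrable.mono' (hgshift.const_mul (M / 4))
      ((hEmeas.comp (measurable_id.sub_const η)).aestronglyMeasurable)
      (Filter.Eventually.of_forall fun y => ?_)
    rw [Real.norm_eq_abs, abs_of_nonneg (hEnonneg _)]
    exact hEle _
  have hXiInt : Integrable (fun y => (acdtgXi α τ gdot η y) ^ 2) := hEshiftInt.congr hxiEq.symm
  refine ⟨?_, hXiInt⟩
  calc ∫ y, (acdtgXi α τ gdot η y) ^ 2 = ∫ y, E (y - η) := integral_congr_ae hxiEq
    _ ≤ ∫ y, M / 4 * acdtgDensity α τ (y - η) :=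
        integral_mono_ae hEshiftInt (hgshift.const_mul _)
          (Filter.Eventually.of_forall fun y => hEle _)
    _ = M / 4 * ∫ y, acdtgDensity α τ (y - η) := integral_const_mul _ _
    _ = M / 4 * 1 := by
        rw [integral_sub_right_eq_self (acdtgDensity α τ) η, hgOne]
    _ ≤ M / 2 := by rw [mul_one]; linarith
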